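/- Let Q(t) ≥ 0 and z : [0,∞) → [0,∞) absolutely continuous satisfying d/dt[(1+t/k)^k z(t)] ≤ Q(t) + C e^{-λ t} (1+t/k)^k A for all t, where k ≥ 1 is an integer, λ > 0, C, A ≥ 0, and suppose Q(t) ≤ 0 whenever (1+t/k)^k z(t) ≥ D^{-k} for a fixed constant D > 0. Then sup_{t ≥ 0} (1+t/k)^k z(t) ≤ max(z(0), D^{-k}) + C A ∫_0^∞ e^{-λ s}(1+s/k)^k ds, and in particular the integral ∫_0^∞ e^{-λ s}(1+s/k)^k ds is finite. -/
import Mathlib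


open MeasureTheory Real

private lemma aux_integrable (k : ℕ) (hk : 1 ≤ k) (lam : ℝ) (hlam : 0 < lam) :
    IntegrableOn (fun s => Real.exp (-lam * s) * (1 + s / (k : ℝ)) ^ k) (Set.Ioi 0) := by
  have hcont : Continuous fun s : ℝ => Real.exp (-lam * s) * (1 + s / (k : ℝ)) ^ k := by
    fun_prop
  refine integrable_of_isBigO_exp_neg (half_pos hlam) hcont.continuousOn ?_
  have h1 : (fun x : ℝ => (1 + x / (k : ℝ)) ^ k) =O[Filter.atTop] fun x : ℝ => x ^ k := by
    refine Asymptotics.IsBigO.pow ?_ k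
    rw [Asymptotics.isBigO_iff]
    refine ⟨2, ?_⟩
    filter_upwards [Filter.eventually_ge_atTop (k : ℝ)] with x hx
    have hk1 : (1:ℝ) ≤ (k:ℝ) := by exact_mod_cast hk
    have hx1 : (1:ℝ) ≤ x := le_trans hk1 hx
    have : 1 + x / (k : ℝ) ≤ 2 * x := by
      have : x / (k:ℝ) ≤ x := by
        rw [div_le_iff₀ (by linarith)]
        nlinarith
      linarith
    rw [Real.norm_eq_abs, Real.norm_eq_abs, abs_of_nonneg (by positivity),
      abs_of_nonneg (by linarith)]
    linarith
  have h2 := h1.trans_isLittleO (isLittleO_pow_exp_pos_mul_atTop k (half_pos hlam))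
  rw [Asymptotics.isBigO_iff]
  refine ⟨1, ?_⟩
  filter_upwards [h2.def one_pos] with x hx
  simp only [Real.norm_eq_abs, abs_mul, Real.abs_exp]
  calc Real.exp (-lam * x) * |(1 + x / (k:ℝ))^k|
      ≤ Real.exp (-lam * x) * (1 * Real.exp (lam/2 * x)) := by
        apply mul_le_mul_of_nonneg_left _ (Real.exp_nonneg _)
        simpa [Real.abs_exp] using hx
    _ = Real.exp (-(lam/2) * x) := by rw [one_mul, ← Real.exp_add]; ring_nf
    _ ≤ 1 * Real.exp (-(lam/2) * x) := by rw [one_mul]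

/-- The continuity argument of Section 7: if `F(t) = (1+t/k)^k z(t)` satisfies
`F' ≤ Q + C e^{-λt}(1+t/k)^k A`, `Q ≥ 0`, and `Q(t) ≤ 0` whenever `F(t) ≥ D^{-k}`,
then `sup_t F(t) ≤ max(z(0), D^{-k}) + CA ∫₀^∞ e^{-λs}(1+s/k)^k ds`, and the
integral `∫₀^∞ e^{-λs}(1+s/k)^k ds` is finite. -/
theorem continuity_argument_polynomial_bound (k : ℕ) (hk : 1 ≤ k)
    (lam C A D : ℝ) (hlam : 0 < lam) (hC : 0 ≤ C) (hA : 0 ≤ A) (hD : 0 < D)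
    (z F' Q : ℝ → ℝ)
    (hz : ∀ t ∈ Set.Ici (0 : ℝ), 0 ≤ z t)
    (hQ0 : ∀ t ∈ Set.Ici (0 : ℝ), 0 ≤ Q t)
    (hder : ∀ t ∈ Set.Ici (0 : ℝ),
      HasDerivWithinAt (fun s => (1 + s / (k : ℝ)) ^ k * z s) (F' t) (Set.Ici 0) t)
    (hineq : ∀ t ∈ Set.Ici (0 : ℝ),
      F' t ≤ Q t + C * Real.exp (-lam * t) * (1 + t / (k : ℝ)) ^ k * A)
    (hQneg : ∀ t ∈ Set.Ici (0 : ℝ),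
      D ^ (-(k : ℝ)) ≤ (1 + t / (k : ℝ)) ^ k * z t → Q t ≤ 0) :
    (∀ t ∈ Set.Ici (0 : ℝ),
      (1 + t / (k : ℝ)) ^ k * z t ≤
        max (z 0) (D ^ (-(k : ℝ))) +
          C * A * ∫ s in Set.Ioi (0 : ℝ), Real.exp (-lam * s) * (1 + s / (k : ℝ)) ^ k) ∧
    IntegrableOn (fun s => Real.exp (-lam * s) * (1 + s / (k : ℝ)) ^ k)
      (Set.Ioi 0) := by
  set φ : ℝ → ℝ := fun s => Real.exp (-lam * s) * (1 + s / (k : ℝ)) ^ k with hφ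
  have hφint : IntegrableOn φ (Set.Ioi 0) := aux_integrable k hk lam hlam
  refine ⟨?_, hφint⟩
  have hφcont : Continuous φ := by fun_prop
  have hφnn : ∀ s : ℝ, 0 ≤ s → 0 ≤ φ s := by
    intro s hs
    have : (0:ℝ) ≤ 1 + s / (k:ℝ) := by positivity
    positivity
  set I : ℝ := ∫ s in Set.Ioi (0:ℝ), φ s with hI
  have hI0 : 0 ≤ I := setIntegral_nonneg measurableSet_Ioi fun s hs => hφnn s (le_of_lt hs)
  set g : ℝ → ℝ := fun t => C * A * ∫ s in (0:ℝ)..t, φ s with hg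
  have hg_deriv : ∀ t : ℝ, HasDerivAt g (C * A * φ t) t := by
    intro t
    exact (intervalIntegral.integral_hasDerivAt_right (hφcont.intervalIntegrable 0 t)
      (hφcont.stronglyMeasurableAtFilter _ _) hφcont.continuousAt).const_mul (C * A)
  have hg0 : g 0 = 0 := by simp [hg]
  have hg_nn : ∀ t : ℝ, 0 ≤ t → 0 ≤ g t := by
    intro t ht
    apply mul_nonneg (mul_nonneg hC hA)
    exact intervalIntegral.integral_nonneg ht (fun s hs => hφnn s hs.1)
  have hg_le : ∀ t : ℝ, 0 ≤ t → g t ≤ C * A * I := by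
    intro t ht
    apply mul_le_mul_of_nonneg_left _ (mul_nonneg hC hA)
    rw [intervalIntegral.integral_of_le ht]
    refine setIntegral_mono_set hφint ?_ ?_
    · filter_upwards [ae_restrict_mem measurableSet_Ioi] with s hs
      exact hφnn s (le_of_lt hs)
    · exact Filter.Eventually.of_forall Set.Ioc_subset_Ioi_self
  set F : ℝ → ℝ := fun s => (1 + s / (k : ℝ)) ^ k * z s with hF
  have hF0 : F 0 = z 0 := by simp [hF]
  have hFcont : ContinuousOn F (Set.Ici 0) := fun t ht => (hder t ht).continuousWithinAt
  set h : ℝ → ℝ := fun s => F s - g s with hh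
  set M : ℝ := max (z 0) (D ^ (-(k : ℝ))) with hM
  have key : ∀ t ∈ Set.Ici (0:ℝ), h t ≤ M := by
    by_contra hcon
    push_neg at hcon
    obtain ⟨t, ht0, htM⟩ := hcon
    have ht0' : (0:ℝ) ≤ t := ht0
    set S : Set ℝ := {s | s ∈ Set.Icc 0 t ∧ h s ≤ M} with hS
    have hS0 : (0:ℝ) ∈ S := by
      refine ⟨⟨le_refl _, ht0'⟩, ?_⟩
      simp only [hh, hF0, hg0, sub_zero]
      exact le_max_left _ _
    have hcontIcc : ContinuousOn h (Set.Icc 0 t) :=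
      (hFcont.mono Set.Icc_subset_Ici_self).sub
        (fun s _ => ((hg_deriv s).continuousAt).continuousWithinAt)
    have hScl : IsClosed S := by
      have : S = Set.Icc 0 t ∩ h ⁻¹' Set.Iic M := by
        ext s; simp [hS, Set.mem_Icc, and_assoc]
      rw [this]
      exact hcontIcc.preimage_isClosed_of_isClosed isClosed_Icc isClosed_Iic
    have hSbdd : BddAbove S := BddAbove.mono (fun s hs => hs.1) (bddAbove_Icc)
    set s0 : ℝ := sSup S with hs0def
    have hs0S : s0 ∈ S := hScl.csSup_mem ⟨0, hS0⟩ hSbdd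
    have hs00 : (0:ℝ) ≤ s0 := hs0S.1.1
    have hs0t : s0 ≤ t := hs0S.1.2
    have hs0lt : s0 < t := by
      rcases lt_or_eq_of_le hs0t with hlt | heq
      · exact hlt
      · exact absurd (heq ▸ hs0S.2) (not_le.mpr htM)
    have hbig : ∀ s ∈ Set.Ioc s0 t, M < h s := by
      intro s hs
      by_contra hle
      push_neg at hle
      have : s ∈ S := ⟨⟨le_trans hs00 (le_of_lt hs.1), hs.2⟩, hle⟩
      exact absurd (le_csSup hSbdd this) (not_le.mpr hs.1)
    have hanti : AntitoneOn h (Set.Icc s0 t) := by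
      apply antitoneOn_of_deriv_nonpos (convex_Icc s0 t)
      · exact hcontIcc.mono (Set.Icc_subset_Icc_left hs00)
      · rw [interior_Icc]
        intro x hx
        have hx0 : 0 < x := lt_of_le_of_lt hs00 hx.1
        have hder' : HasDerivAt h (F' x - C * A * φ x) x := by
          have h1 : HasDerivAt F (F' x) x :=
            (hder x (le_of_lt hx0)).hasDerivAt (Ici_mem_nhds hx0)
          exact h1.sub (hg_deriv x)
        exact hder'.differentiableAt.differentiableWithinAt
      · rw [interior_Icc]
        intro x hx
        have hx0 : 0 < x := lt_of_le_of_lt hs00 hx.1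
        have hder' : HasDerivAt h (F' x - C * A * φ x) x := by
          have h1 : HasDerivAt F (F' x) x :=
            (hder x (le_of_lt hx0)).hasDerivAt (Ici_mem_nhds hx0)
          exact h1.sub (hg_deriv x)
        rw [hder'.deriv]
        have hhx : M < h x := hbig x ⟨hx.1, le_of_lt hx.2⟩
        have hFx : D ^ (-(k : ℝ)) ≤ F x := by
          have : h x ≤ F x := by
            simp only [hh]
            linarith [hg_nn x (le_of_lt hx0)]
          calc D ^ (-(k : ℝ)) ≤ M := le_max_right _ _
            _ ≤ h x := le_of_lt hhx
            _ ≤ F x := this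
        have hQx : Q x ≤ 0 := hQneg x (le_of_lt hx0) hFx
        have := hineq x (le_of_lt hx0)
        have heq : Q x + C * Real.exp (-lam * x) * (1 + x / (k : ℝ)) ^ k * A
            = Q x + C * A * φ x := by simp only [hφ]; ring
        linarith [heq ▸ this]
    have : h t ≤ h s0 :=
      hanti ⟨le_refl _, hs0t⟩ ⟨le_of_lt hs0lt, le_refl _⟩ (le_of_lt hs0lt)
    linarith [hs0S.2]
  intro t ht
  have h1 : F t ≤ M + g t := by
    have := key t ht
    simp only [hh] at this
    linarith
  have h2 : g t ≤ C * A * I := hg_le t ht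
  calc (1 + t / (k : ℝ)) ^ k * z t = F t := rfl
    _ ≤ M + g t := h1
    _ ≤ M + C * A * I := by linarith
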